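/- Let Σ be a counting signature with exactly m counting predicates, let Y be a non-negative integer, and let 𝔄 be a Y-branching structure interpreting Σ. Let Σ' be the signature formed by adding ⌈log₂((mY)² + 1)⌉ new unary predicates to Σ, regarded as a counting signature with the same counting predicates as Σ. Then 𝔄 can be expanded to a chromatic structure 𝔄' interpreting Σ' (i.e., there is a Σ'-structure 𝔄' on the same domain whose reduct to Σ is 𝔄 and which is chromatic over Σ'). -/

import Mathlib

/-- A counting signature: finite sets of unary and binary predicate symbols,
with a distinguished finite set of binary predicates (the counting predicates). -/
structure CSig where
  U : Type
  B : Type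
  [instU : Fintype U]
  [instDU : DecidableEq U]
  [instB : Fintype B]
  [instDB : DecidableEq B]
  counting : Finset B

attribute [instance] CSig.instU CSig.instDU CSig.instB CSig.instDB

/-- A structure interpreting a counting signature over domain `A`. -/
structure Struc (σ : CSig) (A : Type) where
  unary : σ.U → A → Bool
  binary : σ.B → A → A → Bool

/-- A 1-type over `σ`: a truth assignment to all literals in the single variable x. -/
structure OneType (σ : CSig) where
  u : σ.U → Bool
  d : σ.B → Bool
deriving DecidableEq, Fintype

/-- A 2-type over `σ`: a truth assignment to all equality-free literals in x, y. -/
structure TwoType (σ : CSig) where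
  ux : σ.U → Bool
  uy : σ.U → Bool
  dx : σ.B → Bool
  dy : σ.B → Bool
  rxy : σ.B → Bool
  ryx : σ.B → Bool
deriving DecidableEq

variable {σ : CSig} {A : Type}

/-- Explicit equivalence of `TwoType σ` with a product, giving finiteness. -/
def TwoType.equivProd (σ : CSig) :
    TwoType σ ≃ ((σ.U → Bool) × (σ.U → Bool) × (σ.B → Bool) × (σ.B → Bool) ×
      (σ.B → Bool) × (σ.B → Bool)) where
  toFun τ := ⟨τ.ux, τ.uy, τ.dx, τ.dy, τ.rxy, τ.ryx⟩
  invFun p := ⟨p.1, p.2.1, p.2.2.1, p.2.2.2.1, p.2.2.2.2.1, p.2.2.2.2.2⟩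
  left_inv τ := rfl
  right_inv p := rfl

instance : Fintype (TwoType σ) := Fintype.ofEquiv _ (TwoType.equivProd σ).symm

/-- The result of transposing x and y in a 2-type. -/
def TwoType.inv (τ : TwoType σ) : TwoType σ := ⟨τ.uy, τ.ux, τ.dy, τ.dx, τ.ryx, τ.rxy⟩

/-- The 1-type (of x) included in a 2-type. -/
def TwoType.tp1 (τ : TwoType σ) : OneType σ := ⟨τ.ux, τ.dx⟩

/-- tp₂(τ) = tp₁(τ⁻¹). -/
def TwoType.tp2 (τ : TwoType σ) : OneType σ := ⟨τ.uy, τ.dy⟩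

/-- The 1-type of an element. -/
def Struc.tp1 (S : Struc σ A) (a : A) : OneType σ :=
  ⟨fun p => S.unary p a, fun f => S.binary f a a⟩

/-- The 2-type of a pair of (distinct) elements. -/
def Struc.tp2 (S : Struc σ A) (a b : A) : TwoType σ :=
  ⟨fun p => S.unary p a, fun p => S.unary p b,
   fun f => S.binary f a a, fun f => S.binary f b b,
   fun f => S.binary f a b, fun f => S.binary f b a⟩

/-- A 2-type is a message-type if it contains f(x,y) for some counting predicate f. -/
def IsMessage (σ : CSig) (τ : TwoType σ) : Prop := ∃ f ∈ σ.counting, τ.rxy f = true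

instance : DecidablePred (IsMessage σ) := fun τ => by unfold IsMessage; infer_instance

/-- A message-type whose inverse is also a message-type. -/
def IsInvertible (σ : CSig) (τ : TwoType σ) : Prop := IsMessage σ τ ∧ IsMessage σ τ.inv

instance : DecidablePred (IsInvertible σ) := fun τ => by unfold IsInvertible; infer_instance

/-- A 2-type is silent if neither it nor its inverse is a message-type. -/
def IsSilent (σ : CSig) (τ : TwoType σ) : Prop := ¬ IsMessage σ τ ∧ ¬ IsMessage σ τ.inv

/-- The (sub)type of message-types over σ. -/
def MsgType (σ : CSig) := {τ : TwoType σ // IsMessage σ τ}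

instance : Fintype (MsgType σ) := Subtype.fintype _
instance : DecidableEq (MsgType σ) := fun a b => by
  unfold MsgType at a b; exact inferInstanceAs (Decidable (a = b))

/-- Y-branching: every element sends at most Y messages along each counting predicate. -/
def Struc.Branching (S : Struc σ A) (Y : ℕ) : Prop :=
  ∀ a : A, ∀ f ∈ σ.counting, {b : A | b ≠ a ∧ S.binary f a b = true}.encard ≤ (Y : ℕ∞)

def Struc.FinitelyBranching (S : Struc σ A) : Prop := ∃ Y : ℕ, S.Branching Y

/-- Chromatic: distinct elements connected by a chain of 1 or 2 invertible
message-types have distinct 1-types. -/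
def Struc.Chromatic (S : Struc σ A) : Prop :=
  (∀ a a' : A, a ≠ a' → IsInvertible σ (S.tp2 a a') → S.tp1 a ≠ S.tp1 a') ∧
  (∀ a a' a'' : A, a ≠ a' → a' ≠ a'' → a ≠ a'' →
     IsInvertible σ (S.tp2 a a') → IsInvertible σ (S.tp2 a' a'') → S.tp1 a ≠ S.tp1 a'')

/-- Z-differentiated: each 1-type is realized either at most once or more than Z times. -/
def Struc.Differentiated (S : Struc σ A) (Z : ℕ) : Prop :=
  ∀ π : OneType σ, {a : A | S.tp1 a = π}.encard ≤ 1 ∨ (Z : ℕ∞) < {a : A | S.tp1 a = π}.encard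

/-- π and π' form a noisy pair: no silent 2-type connects an element of 1-type π
to an element of 1-type π'. -/
def NoisyPair (S : Struc σ A) (π π' : OneType σ) : Prop :=
  ¬ ∃ a a' : A, a ≠ a' ∧ S.tp1 a = π ∧ S.tp1 a' = π' ∧ IsSilent σ (S.tp2 a a')

/-- The Π-profile of a: for each message-type μ, the number of elements b with 1-type
in Π such that tp[a,b] = μ. -/
noncomputable def Struc.pr (S : Struc σ A) (P : Set (OneType σ)) (a : A) : MsgType σ → ℕ∞ :=
  fun μ => {b : A | b ≠ a ∧ S.tp1 b ∈ P ∧ S.tp2 a b = μ.1}.encard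

/-- The Π-count of a: for each counting predicate f, the number of elements b ≠ a with
1-type in Π such that f[a,b] holds. -/
noncomputable def Struc.ct (S : Struc σ A) (P : Set (OneType σ)) (a : A) :
    {f : σ.B // f ∈ σ.counting} → ℕ∞ :=
  fun f => {b : A | b ≠ a ∧ S.tp1 b ∈ P ∧ S.binary f.1 a b = true}.encard

/-- A Π-group: all elements share the same 1-type and the same Π-count. -/
def PiGroup (S : Struc σ A) (P : Set (OneType σ)) (B : Set A) : Prop :=
  ∀ a ∈ B, ∀ b ∈ B, S.tp1 a = S.tp1 b ∧ S.ct P a = S.ct P b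

/-- A π-patch: a {π}-group all of whose elements have {π}-profiles agreeing on the
invertible message-types (the first M* coordinates). -/
def PiPatch (S : Struc σ A) (π : OneType σ) (B : Set A) : Prop :=
  PiGroup S {π} B ∧
  ∀ a ∈ B, ∀ b ∈ B, ∀ μ : MsgType σ, IsInvertible σ μ.1 → S.pr {π} a μ = S.pr {π} b μ

/-- τ is realized in S. -/
def Realizes2 (S : Struc σ A) (τ : TwoType σ) : Prop := ∃ a b : A, a ≠ b ∧ S.tp2 a b = τ

/-- (Π,B)-approximation. -/
def PiBApprox (S S' : Struc σ A) (P : Set (OneType σ)) (B : Set A) : Prop :=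
  S'.Chromatic ∧
  (∀ τ : TwoType σ, Realizes2 S' τ → Realizes2 S τ) ∧
  ∀ a : A,
    S'.tp1 a = S.tp1 a ∧
    S'.pr Pᶜ a = S.pr Pᶜ a ∧
    (a ∉ B → S'.pr Set.univ a = S.pr Set.univ a) ∧
    (a ∈ B → S'.ct P a = S.ct P a)
/-- A star-type: a 1-type together with a vector of multiplicities indexed by the
message-types. -/
structure StarType (σ : CSig) where
  tp : OneType σ
  v : MsgType σ → ℕ
deriving DecidableEq

/-- The defining condition on star-types: v(μ) > 0 implies tp₁(μ) = π. -/
def StarType.IsValid (s : StarType σ) : Prop :=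
  ∀ μ : MsgType σ, 0 < s.v μ → μ.1.tp1 = s.tp

/-- The star-type of an element: its 1-type together with its profile. -/
noncomputable def StarOf (S : Struc σ A) (a : A) : StarType σ where
  tp := S.tp1 a
  v := fun μ => ({b : A | b ≠ a ∧ S.tp2 a b = μ.1}.encard).toNat

/-- X-sparse: at most X distinct star-types are realized. -/
noncomputable def Struc.Sparse (S : Struc σ A) (X : ℕ) : Prop :=
  {st : StarType σ | ∃ a : A, StarOf S a = st}.encard ≤ (X : ℕ∞)

/-- A chromatic star-type: for every 1-type π', the multiplicities of invertible
message-types μ with tp₂(μ) = π' sum to at most 1, and to 0 when π' = tp. -/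
def StarType.Chromatic (s : StarType σ) : Prop :=
  ∀ π' : OneType σ,
    (∑ μ ∈ Finset.univ.filter (fun μ : MsgType σ => IsInvertible σ μ.1 ∧ μ.1.tp2 = π'),
        s.v μ) ≤ 1 ∧
    (π' = s.tp →
      (∑ μ ∈ Finset.univ.filter (fun μ : MsgType σ => IsInvertible σ μ.1 ∧ μ.1.tp2 = π'),
        s.v μ) = 0)

/-- A frame over σ: a finite set of (pairwise distinct) star-types, a set I of
unordered pairs of 1-types, and a choice θ of a silent 2-type for each pair in I. -/
structure Frame (σ : CSig) where
  stars : Finset (StarType σ)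
  valid : ∀ s ∈ stars, s.IsValid
  I : Set (Sym2 (OneType σ))
  θ : Sym2 (OneType σ) → TwoType σ
  hθ : ∀ p ∈ I, IsSilent σ (θ p) ∧ Sym2.mk (θ p).tp1 (θ p).tp2 = p

/-- Y-bounded frame: all star-type multiplicities are at most Y. -/
def Frame.Bounded (F : Frame σ) (Y : ℕ) : Prop :=
  ∀ s ∈ F.stars, ∀ μ : MsgType σ, s.v μ ≤ Y

/-- A chromatic frame: all its star-types are chromatic. -/
def Frame.Chromatic (F : Frame σ) : Prop := ∀ s ∈ F.stars, s.Chromatic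

/-- F describes S: the stars of F are exactly the realized star-types; I consists of the
non-noisy pairs of 1-types; and each θ-value is realized. -/
def Describes (F : Frame σ) (S : Struc σ A) : Prop :=
  (∀ st : StarType σ, st ∈ F.stars ↔ ∃ a : A, StarOf S a = st) ∧
  (∀ π π' : OneType σ, Sym2.mk π π' ∈ F.I ↔ ¬ NoisyPair S π π') ∧
  (∀ p ∈ F.I, ∃ a b : A, a ≠ b ∧ S.tp2 a b = F.θ p)

/-- The number M* of invertible message-types over σ. -/
def MstarCard (σ : CSig) : ℕ :=
  (Finset.univ.filter (fun μ : MsgType σ => IsInvertible σ μ.1)).card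

/-- p_{ik} = 1: the star-type sends no message to any element of 1-type π. -/
def PZero (s : StarType σ) (π : OneType σ) : Prop :=
  ∀ μ : MsgType σ, μ.1.tp2 = π → s.v μ = 0

instance (s : StarType σ) (π : OneType σ) : Decidable (PZero s π) := by
  unfold PZero; infer_instance

/-- r_{ik}: total multiplicity of non-invertible message-types with tp₂ = π. -/
def RCoeff (s : StarType σ) (π : OneType σ) : ℕ :=
  ∑ μ ∈ Finset.univ.filter (fun μ : MsgType σ => ¬ IsInvertible σ μ.1 ∧ μ.1.tp2 = π), s.v μ

/-- s_{ik}: total multiplicity of message-types with tp₂ = π. -/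
def SCoeff (s : StarType σ) (π : OneType σ) : ℕ :=
  ∑ μ ∈ Finset.univ.filter (fun μ : MsgType σ => μ.1.tp2 = π), s.v μ

/-- u_i = Σ_k o_{ik} w_k. -/
def Frame.uVal (F : Frame σ) (w : StarType σ → ℕ) (π : OneType σ) : ℕ :=
  ∑ s ∈ F.stars.filter (fun s => s.tp = π), w s

/-- v_j = Σ_k q_{jk} w_k. -/
def Frame.vVal (F : Frame σ) (w : StarType σ → ℕ) (μ : MsgType σ) : ℕ :=
  ∑ s ∈ F.stars, s.v μ * w s

/-- x_{ii'} = Σ_k o_{ik} p_{i'k} w_k. -/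
def Frame.xVal (F : Frame σ) (w : StarType σ → ℕ) (π π' : OneType σ) : ℕ :=
  ∑ s ∈ F.stars.filter (fun s => s.tp = π ∧ PZero s π'), w s

/-- w is a Z-solution of F (conditions C1–C6, over positive integers). -/
def IsZSolution (F : Frame σ) (Z : ℕ) (w : StarType σ → ℕ) : Prop :=
  (∀ s ∈ F.stars, 0 < w s) ∧
  (∀ μ μ' : MsgType σ, IsInvertible σ μ.1 → μ'.1 = μ.1.inv → F.vVal w μ = F.vVal w μ') ∧
  (∀ π : OneType σ, ∀ s ∈ F.stars, SCoeff s π ≤ F.uVal w π) ∧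
  (∀ π : OneType σ, F.uVal w π ≤ 1 ∨ Z < F.uVal w π) ∧
  (∀ π π' : OneType σ, ∀ s ∈ F.stars, s.tp = π →
     (1 < F.uVal w π ∨ RCoeff s π' ≤ F.xVal w π' π)) ∧
  (∀ π π' : OneType σ, Sym2.mk π π' ∉ F.I → F.uVal w π ≤ 1 ∨ F.uVal w π' ≤ 1) ∧
  (∀ π π' : OneType σ, ∀ s ∈ F.stars, Sym2.mk π π' ∉ F.I → s.tp = π →
     (1 < F.uVal w π ∨ F.xVal w π' π ≤ RCoeff s π'))

/-- u_i over ℕ* = ℕ ∪ {ℵ₀}. -/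
def Frame.uValE (F : Frame σ) (w : StarType σ → ℕ∞) (π : OneType σ) : ℕ∞ :=
  ∑ s ∈ F.stars.filter (fun s => s.tp = π), w s

/-- v_j over ℕ*. -/
def Frame.vValE (F : Frame σ) (w : StarType σ → ℕ∞) (μ : MsgType σ) : ℕ∞ :=
  ∑ s ∈ F.stars, (s.v μ : ℕ∞) * w s

/-- x_{ii'} over ℕ*. -/
def Frame.xValE (F : Frame σ) (w : StarType σ → ℕ∞) (π π' : OneType σ) : ℕ∞ :=
  ∑ s ∈ F.stars.filter (fun s => s.tp = π ∧ PZero s π'), w s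

/-- w is an extended Z-solution of F: a Z-solution over ℕ* = ℕ ∪ {ℵ₀}
(with nonzero components). -/
def IsExtZSolution (F : Frame σ) (Z : ℕ) (w : StarType σ → ℕ∞) : Prop :=
  (∀ s ∈ F.stars, w s ≠ 0) ∧
  (∀ μ μ' : MsgType σ, IsInvertible σ μ.1 → μ'.1 = μ.1.inv → F.vValE w μ = F.vValE w μ') ∧
  (∀ π : OneType σ, ∀ s ∈ F.stars, (SCoeff s π : ℕ∞) ≤ F.uValE w π) ∧
  (∀ π : OneType σ, F.uValE w π ≤ 1 ∨ (Z : ℕ∞) < F.uValE w π) ∧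
  (∀ π π' : OneType σ, ∀ s ∈ F.stars, s.tp = π →
     (1 < F.uValE w π ∨ (RCoeff s π' : ℕ∞) ≤ F.xValE w π' π)) ∧
  (∀ π π' : OneType σ, Sym2.mk π π' ∉ F.I → F.uValE w π ≤ 1 ∨ F.uValE w π' ≤ 1) ∧
  (∀ π π' : OneType σ, ∀ s ∈ F.stars, Sym2.mk π π' ∉ F.I → s.tp = π →
     (1 < F.uValE w π ∨ F.xValE w π' π ≤ (RCoeff s π' : ℕ∞)))

/-- The data of a normal-form sentence φ*: a quantifier-free equality-free α(x)
(given semantically by the set of 1-types entailing it), a quantifier-free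
equality-free β(x,y) (given by the set of 2-types entailing it), and positive
counts C_h for the counting predicates. -/
structure NormalForm (σ : CSig) where
  alpha : OneType σ → Prop
  beta : TwoType σ → Prop
  C : σ.B → ℕ
  hC : ∀ f ∈ σ.counting, 0 < C f

/-- S ⊨ φ*. -/
def SatNF (N : NormalForm σ) (S : Struc σ A) : Prop :=
  (∀ a : A, N.alpha (S.tp1 a)) ∧
  (∀ a b : A, a ≠ b → N.beta (S.tp2 a b)) ∧
  (∀ f ∈ σ.counting, ∀ a : A,
     {b : A | b ≠ a ∧ S.binary f a b = true}.encard = (N.C f : ℕ∞))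

/-- F ⊨ φ*. -/
def FrameSatNF (N : NormalForm σ) (F : Frame σ) : Prop :=
  (∀ s ∈ F.stars, N.alpha s.tp) ∧
  (∀ s ∈ F.stars, ∀ μ : MsgType σ, 0 < s.v μ → N.beta μ.1 ∧ N.beta μ.1.inv) ∧
  (∀ p ∈ F.I, N.beta (F.θ p) ∧ N.beta ((F.θ p).inv)) ∧
  (∀ s ∈ F.stars, ∀ f ∈ σ.counting,
     (∑ μ ∈ Finset.univ.filter (fun μ : MsgType σ => μ.1.rxy f = true), s.v μ) = N.C f)

/-- The signature obtained from σ by adding k new unary predicates; the counting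
predicates are unchanged. -/
def addUnary (σ : CSig) (k : ℕ) : CSig where
  U := σ.U ⊕ Fin k
  B := σ.B
  counting := σ.counting

/-- S' (interpreting σ with k extra unary predicates) is an expansion of S:
it agrees with S on all predicates of σ. -/
def IsExpansion {σ : CSig} {k : ℕ} {A : Type} (S' : Struc (addUnary σ k) A)
    (S : Struc σ A) : Prop :=
  (∀ (p : σ.U) (a : A), S'.unary (Sum.inl p) a = S.unary p a) ∧
  (∀ (f : σ.B) (a b : A), S'.binary f a b = S.binary f a b)
open Finset in
noncomputable def greedyCol (M : ℕ) (Conf : ℕ → Finset ℕ) : ℕ → Fin (M + 1)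
  | n =>
    if h : (Finset.univ \ ((Conf n).filter (fun m => m < n)).attach.image
        (fun m => greedyCol M Conf m.1)).Nonempty
    then h.choose else ⟨0, Nat.succ_pos M⟩
decreasing_by all_goals exact (Finset.mem_filter.mp m.2).2

lemma greedyCol_ne (M : ℕ) (Conf : ℕ → Finset ℕ) (n : ℕ) (hb : (Conf n).card ≤ M)
    (m : ℕ) (hm : m ∈ Conf n) (hlt : m < n) : greedyCol M Conf n ≠ greedyCol M Conf m := by
  classical
  set used : Finset (Fin (M+1)) := ((Conf n).filter (fun m => m < n)).attach.image
      (fun m => greedyCol M Conf m.1) with hused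
  have hmemf : m ∈ (Conf n).filter (fun m => m < n) := Finset.mem_filter.mpr ⟨hm, hlt⟩
  have hmem : greedyCol M Conf m ∈ used := by
    rw [hused]
    exact Finset.mem_image.mpr ⟨⟨m, hmemf⟩, Finset.mem_attach _ _, rfl⟩
  have hcard : used.card ≤ M := by
    calc used.card ≤ ((Conf n).filter (fun m => m < n)).attach.card := Finset.card_image_le
    _ = ((Conf n).filter (fun m => m < n)).card := Finset.card_attach
    _ ≤ (Conf n).card := Finset.card_filter_le _ _
    _ ≤ M := hb
  have hne : (Finset.univ \ used).Nonempty := by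
    rw [Finset.sdiff_nonempty]
    intro hsub
    have := Finset.card_le_card hsub
    simp only [Finset.card_univ, Fintype.card_fin] at this
    omega
  rw [greedyCol, dif_pos hne]
  have hspec := hne.choose_spec
  rw [Finset.mem_sdiff] at hspec
  intro heq
  exact hspec.2 (heq ▸ hmem)

/-- Lemma 3 (chromatic expansion): a Y-branching structure over a counting signature
with m counting predicates can be expanded to a chromatic structure over the signature
with ⌈log₂((mY)²+1)⌉ extra unary predicates. -/
theorem chromatic_expansion (σ : CSig) (m Y : ℕ) (hm : σ.counting.card = m)
    (A : Type) [Countable A] (S : Struc σ A) (hbr : S.Branching Y) :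
    ∃ S' : Struc (addUnary σ (Nat.clog 2 ((m * Y) ^ 2 + 1))) A,
      IsExpansion S' S ∧ S'.Chromatic := by
  classical
  set M := (m * Y) ^ 2 with hMdef
  set k := Nat.clog 2 (M + 1) with hk
  -- Finite neighbor sets with cardinality bound
  have hNfin : ∀ a : A, ∃ t : Finset A,
      (∀ b, b ∈ t ↔ (b ≠ a ∧ IsInvertible σ (S.tp2 a b))) ∧ t.card ≤ m * Y := by
    intro a
    have hfin : ∀ f : σ.B, f ∈ σ.counting →
        {b : A | b ≠ a ∧ S.binary f a b = true}.Finite ∧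
        {b : A | b ≠ a ∧ S.binary f a b = true}.ncard ≤ Y := fun f hf =>
      Set.encard_le_coe_iff_finite_ncard_le.mp (hbr a f hf)
    set big : Finset A :=
      σ.counting.attach.biUnion (fun f => (hfin f.1 f.2).1.toFinset) with hbig
    have hNsub : ∀ b, b ≠ a → IsInvertible σ (S.tp2 a b) → b ∈ big := by
      intro b hb hinv
      obtain ⟨f, hf, hfb⟩ := hinv.1
      exact Finset.mem_biUnion.mpr ⟨⟨f, hf⟩, Finset.mem_attach _ _,
        (hfin f hf).1.mem_toFinset.mpr ⟨hb, hfb⟩⟩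
    refine ⟨big.filter (fun b => b ≠ a ∧ IsInvertible σ (S.tp2 a b)), ?_, ?_⟩
    · intro b
      simp only [Finset.mem_filter]
      constructor
      · rintro ⟨-, h⟩; exact h
      · rintro ⟨h1, h2⟩; exact ⟨hNsub b h1 h2, h1, h2⟩
    · calc (big.filter (fun b => b ≠ a ∧ IsInvertible σ (S.tp2 a b))).card
          ≤ big.card := Finset.card_filter_le _ _
        _ ≤ ∑ f ∈ σ.counting.attach, ((hfin f.1 f.2).1.toFinset).card :=
            Finset.card_biUnion_le
        _ ≤ ∑ _f ∈ σ.counting.attach, Y := by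
            refine Finset.sum_le_sum (fun f _ => ?_)
            rw [← Set.ncard_eq_toFinset_card _ (hfin f.1 f.2).1]
            exact (hfin f.1 f.2).2
        _ = σ.counting.card * Y := by rw [Finset.sum_const, Finset.card_attach, smul_eq_mul]
        _ = m * Y := by rw [hm]
  set NFin : A → Finset A := fun a => (hNfin a).choose with hNF
  have hNmem : ∀ a b, b ∈ NFin a ↔ (b ≠ a ∧ IsInvertible σ (S.tp2 a b)) :=
    fun a => ((hNfin a).choose_spec).1
  have hNcard : ∀ a, (NFin a).card ≤ m * Y := fun a => ((hNfin a).choose_spec).2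
  have hsymm : ∀ a b, b ∈ NFin a → a ∈ NFin b := by
    intro a b hb
    rw [hNmem] at hb ⊢
    exact ⟨hb.1.symm, hb.2.2, hb.2.1⟩
  set CFin : A → Finset A :=
    fun a => NFin a ∪ (NFin a).biUnion (fun b => (NFin b).erase a) with hCF
  have hCcard : ∀ a, (CFin a).card ≤ M := by
    intro a
    have h1 : ∀ b ∈ NFin a, ((NFin b).erase a).card ≤ m * Y - 1 := by
      intro b hb
      rw [Finset.card_erase_of_mem (hsymm a b hb)]
      exact Nat.sub_le_sub_right (hNcard b) 1
    have h2 : ((NFin a).biUnion (fun b => (NFin b).erase a)).card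
        ≤ (m * Y) * (m * Y - 1) := by
      calc ((NFin a).biUnion (fun b => (NFin b).erase a)).card
          ≤ ∑ b ∈ NFin a, ((NFin b).erase a).card := Finset.card_biUnion_le
        _ ≤ ∑ _b ∈ NFin a, (m * Y - 1) := Finset.sum_le_sum h1
        _ = (NFin a).card * (m * Y - 1) := by
            rw [Finset.sum_const, smul_eq_mul]
        _ ≤ (m * Y) * (m * Y - 1) := Nat.mul_le_mul_right _ (hNcard a)
    have h3 : (CFin a).card ≤ (NFin a).card
        + ((NFin a).biUnion (fun b => (NFin b).erase a)).card := Finset.card_union_le _ _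
    have h4 : m * Y + (m * Y) * (m * Y - 1) ≤ M := by
      rw [hMdef]
      rcases Nat.eq_zero_or_pos (m * Y) with h | h
      · simp [h]
      · have heq1 : 1 + (m * Y - 1) = m * Y := by omega
        calc m * Y + (m * Y) * (m * Y - 1)
            = (m * Y) * (1 + (m * Y - 1)) := by ring
          _ = (m * Y) * (m * Y) := by rw [heq1]
          _ = (m * Y) ^ 2 := (sq (m * Y)).symm
          _ ≤ (m * Y) ^ 2 := le_rfl
    calc (CFin a).card ≤ (NFin a).card
        + ((NFin a).biUnion (fun b => (NFin b).erase a)).card := h3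
      _ ≤ m * Y + (m * Y) * (m * Y - 1) := Nat.add_le_add (hNcard a) h2
      _ ≤ M := h4
  have hCsymm : ∀ a b, b ∈ CFin a → a ∈ CFin b := by
    intro a b hb
    rcases Finset.mem_union.mp hb with h | h
    · exact Finset.mem_union_left _ (hsymm a b h)
    · obtain ⟨c, hc, hbc⟩ := Finset.mem_biUnion.mp h
      have hbne : b ≠ a := Finset.ne_of_mem_erase hbc
      have hbinc : b ∈ NFin c := Finset.mem_of_mem_erase hbc
      refine Finset.mem_union_right _ (Finset.mem_biUnion.mpr ⟨c, hsymm c b hbinc, ?_⟩)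
      exact Finset.mem_erase.mpr ⟨hbne.symm, hsymm a c hc⟩
  -- greedy coloring
  obtain ⟨e, he⟩ := Countable.exists_injective_nat A
  set Conf : ℕ → Finset ℕ :=
    fun n => if h : ∃ a : A, e a = n then (CFin h.choose).image e else ∅ with hConf
  have hConfcard : ∀ n, (Conf n).card ≤ M := by
    intro n
    rw [hConf]
    dsimp only
    split
    · exact le_trans Finset.card_image_le (hCcard _)
    · simp
  set col : A → Fin (M + 1) := fun a => greedyCol M Conf (e a) with hcoldef
  have hConfa : ∀ a : A, Conf (e a) = (CFin a).image e := by
    intro a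
    have hex : ∃ a' : A, e a' = e a := ⟨a, rfl⟩
    have hch : hex.choose = a := he hex.choose_spec
    rw [hConf]
    simp only [dif_pos hex, hch]
  have hcol : ∀ a b : A, b ∈ CFin a → col a ≠ col b := by
    intro a b hb
    have hab : a ≠ b := by
      rintro rfl
      rcases Finset.mem_union.mp hb with h | h
      · exact ((hNmem a a).mp h).1 rfl
      · obtain ⟨c, _, hbc⟩ := Finset.mem_biUnion.mp h
        exact (Finset.ne_of_mem_erase hbc) rfl
    have hne : e a ≠ e b := fun h => hab (he h)
    rcases lt_or_gt_of_ne hne with h | h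
    · have hb' : a ∈ CFin b := hCsymm a b hb
      have hmem : e a ∈ Conf (e b) := by
        rw [hConfa]; exact Finset.mem_image_of_mem e hb'
      exact (greedyCol_ne M Conf (e b) (hConfcard _) (e a) hmem h).symm
    · have hmem : e b ∈ Conf (e a) := by
        rw [hConfa]; exact Finset.mem_image_of_mem e hb
      exact greedyCol_ne M Conf (e a) (hConfcard _) (e b) hmem h
  -- the expansion
  set S' : Struc (addUnary σ k) A :=
    ⟨fun p => Sum.elim (fun q a => S.unary q a)
      (fun i a => Nat.testBit (col a).1 i.1) p, S.binary⟩ with hS'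
  have hinvt : ∀ a b : A,
      IsInvertible (addUnary σ k) (S'.tp2 a b) → IsInvertible σ (S.tp2 a b) := by
    intro a b h
    obtain ⟨⟨f, hf, hr⟩, g, hg, hgr⟩ := h
    exact ⟨⟨f, hf, hr⟩, g, hg, hgr⟩
  have htp1 : ∀ a b : A, col a ≠ col b → S'.tp1 a ≠ S'.tp1 b := by
    intro a b hnecol heq
    apply hnecol
    have hu : ∀ i : Fin k, Nat.testBit (col a).1 i.1 = Nat.testBit (col b).1 i.1 := by
      intro i
      exact congrArg (fun t : OneType (addUnary σ k) => t.u (Sum.inr i)) heq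
    have hlt2 : ∀ c : A, (col c).1 < 2 ^ k := by
      intro c
      have h1 : (col c).1 < M + 1 := (col c).2
      have h2 : M + 1 ≤ 2 ^ k := by
        rw [hk]
        exact Nat.le_pow_clog one_lt_two _
      omega
    have hv : (col a).1 = (col b).1 := by
      apply Nat.eq_of_testBit_eq
      intro i
      by_cases hik : i < k
      · exact hu ⟨i, hik⟩
      · rw [Nat.testBit_eq_false_of_lt (lt_of_lt_of_le (hlt2 a)
            (Nat.pow_le_pow_right (by norm_num) (le_of_not_gt hik))),
          Nat.testBit_eq_false_of_lt (lt_of_lt_of_le (hlt2 b)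
            (Nat.pow_le_pow_right (by norm_num) (le_of_not_gt hik)))]
    exact Fin.ext hv
  refine ⟨S', ⟨fun p a => rfl, fun f a b => rfl⟩, ?_, ?_⟩
  · intro a a' hne hinv
    exact htp1 a a' (hcol a a'
      (Finset.mem_union_left _ ((hNmem a a').mpr ⟨hne.symm, hinvt a a' hinv⟩)))
  · intro a a' a'' h1 h2 h3 hi1 hi2
    refine htp1 a a'' (hcol a a'' ?_)
    refine Finset.mem_union_right _ (Finset.mem_biUnion.mpr
      ⟨a', (hNmem a a').mpr ⟨h1.symm, hinvt a a' hi1⟩, ?_⟩)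
    exact Finset.mem_erase.mpr ⟨h3.symm, (hNmem a' a'').mpr ⟨h2.symm, hinvt a' a'' hi2⟩⟩
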